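/- Let $G$, $H$, $K$ be groups, $X \leq H \times G$ and $Y \leq K \times H$. There is an isomorphism of $(K,G)$-bisets $$\big((K \times H)/Y\big) \times_H \big((H \times G)/X\big) \cong \bigsqcup_{t \in [p_2(Y)\backslash H / p_1(X)]} (K \times G)/(Y * {}^{(t,1)}X),$$ where $(H\times G)/X$ is the $(H,G)$-biset with $h\cdot(a,b)X\cdot g = (ha, g^{-1}b)X$ and similarly for $(K\times H)/Y$. -/

import Mathlib

variable {G H K : Type*} [Group G] [Group H] [Group K]

/-- The star (composition) product `Y * ⁽ᵗ'¹⁾X` of subgroups `Y ≤ K × H`, `X ≤ H × G`. -/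
def starSubgroup (X : Subgroup (H × G)) (Y : Subgroup (K × H)) (t : H) :
    Subgroup (K × G) where
  carrier := {p : K × G | ∃ h : H, (p.1, h) ∈ Y ∧ (t⁻¹ * h * t, p.2) ∈ X}
  one_mem' := ⟨1, by simp [← Prod.one_eq_mk], by simp [← Prod.one_eq_mk]⟩
  mul_mem' := by
    rintro a b ⟨h, hY, hX⟩ ⟨h', hY', hX'⟩
    refine ⟨h * h', ?_, ?_⟩
    · exact Y.mul_mem hY hY'
    · have : ((t⁻¹ * (h * h') * t : H), (a.2 * b.2 : G)) =
        ((t⁻¹ * h * t, a.2) : H × G) * (t⁻¹ * h' * t, b.2) := by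
        ext <;> simp <;> group
      rw [show ((a * b : K × G).2) = a.2 * b.2 from rfl, this]
      exact X.mul_mem hX hX'
  inv_mem' := by
    rintro a ⟨h, hY, hX⟩
    refine ⟨h⁻¹, ?_, ?_⟩
    · have : ((a.1⁻¹ : K), h⁻¹) = ((a.1, h) : K × H)⁻¹ := rfl
      rw [show ((a⁻¹ : K × G).1) = a.1⁻¹ from rfl, this]
      exact Y.inv_mem hY
    · have : ((t⁻¹ * h⁻¹ * t : H), (a.2⁻¹ : G)) = ((t⁻¹ * h * t, a.2) : H × G)⁻¹ := by
        ext <;> simp <;> group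
      rw [show ((a⁻¹ : K × G).2) = a.2⁻¹ from rfl, this]
      exact X.inv_mem hX

/-- The relation on `V × U` whose quotient is `V ×_H U`: `(v,u) ∼ (v·h, h⁻¹·u)`.
Here `V = (K×H)/Y` and `U = (H×G)/X`, with right `H`-action `v·h = (1,h⁻¹)•v` and
left `H`-action `h•u = (h,1)•u`. -/
def prodRel (X : Subgroup (H × G)) (Y : Subgroup (K × H))
    (p q : ((K × H) ⧸ Y) × ((H × G) ⧸ X)) : Prop :=
  ∃ h : H, q = ((((1 : K), h⁻¹) : K × H) • p.1, ((h⁻¹, (1 : G)) : H × G) • p.2)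

namespace MackeyAux

variable (X : Subgroup (H × G)) (Y : Subgroup (K × H))

lemma prodRel_equiv : Equivalence (prodRel X Y) := by
  constructor
  · intro p; exact ⟨1, by simp [← Prod.one_eq_mk]⟩
  · rintro p q ⟨h, rfl⟩
    refine ⟨h⁻¹, ?_⟩
    simp [smul_smul, Prod.ext_iff, ← Prod.one_eq_mk]
  · rintro p q r ⟨h, rfl⟩ ⟨h', rfl⟩
    refine ⟨h * h', ?_⟩
    simp [smul_smul, Prod.ext_iff, mul_assoc]

/-- the raw map `(k,g) ↦ [((k,1)Y, (t,g)X)]` -/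
def Fmap (t : H) (kg : K × G) : Quot (prodRel X Y) :=
  Quot.mk _ ((((kg.1, (1:H)) : K × H) : (K × H) ⧸ Y), (((t, kg.2) : H × G) : (H × G) ⧸ X))

lemma Fmap_eq_of (t : H) (a b : K × G) (hab : a⁻¹ * b ∈ starSubgroup X Y t) :
    Fmap X Y t a = Fmap X Y t b := by
  obtain ⟨h, hY, hX⟩ := hab
  have hY' : ((a.1⁻¹ * b.1, h) : K × H) ∈ Y := hY
  have hX' : ((t⁻¹ * h * t, a.2⁻¹ * b.2) : H × G) ∈ X := hX
  have h1 : (((a.1, (1:H)) : K × H) : (K × H) ⧸ Y) = (((b.1, h) : K × H) : (K × H) ⧸ Y) := by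
    rw [QuotientGroup.eq]
    have e : ((a.1, (1:H)) : K × H)⁻¹ * (b.1, h) = ((a.1⁻¹ * b.1, h) : K × H) := by
      ext <;> simp
    rw [e]; exact hY'
  have h2 : (((h⁻¹ * t, a.2) : H × G) : (H × G) ⧸ X) = (((t, b.2) : H × G) : (H × G) ⧸ X) := by
    rw [QuotientGroup.eq]
    have e : ((h⁻¹ * t, a.2) : H × G)⁻¹ * (t, b.2) = ((t⁻¹ * h * t, a.2⁻¹ * b.2) : H × G) := by
      ext <;> simp [mul_assoc]
    rw [e]; exact hX'
  unfold Fmap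
  rw [h1, ← h2]
  apply Quot.sound
  refine ⟨h, Prod.ext ?_ ?_⟩
  · show (((b.1, (1:H)) : K × H) : (K × H) ⧸ Y)
      = (((((1:K), h⁻¹) : K × H) * (b.1, h) : K × H) : (K × H) ⧸ Y)
    congr 1
    ext <;> simp
  · show (((h⁻¹ * t, a.2) : H × G) : (H × G) ⧸ X)
      = ((((h⁻¹, (1:G)) : H × G) * (t, a.2) : H × G) : (H × G) ⧸ X)
    congr 1
    ext <;> simp

/-- `F t : (K×G)⧸(Y*ᵗX) → Quot (prodRel X Y)` -/
def F (t : H) : (K × G) ⧸ starSubgroup X Y t → Quot (prodRel X Y) :=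
  fun c => Quotient.liftOn c (Fmap X Y t) (fun a b hab =>
    Fmap_eq_of X Y t a b (QuotientGroup.leftRel_apply.mp hab))

variable (dcReps : Set H)

/-- the full map -/
def Ftot : (Σ t : dcReps, (K × G) ⧸ starSubgroup X Y (t : H)) → Quot (prodRel X Y) :=
  fun s => F X Y (s.1 : H) s.2

lemma Ftot_surj
    (hreps : ∀ h : H, ∃! t : H, t ∈ dcReps ∧
      ∃ a ∈ Y.map (MonoidHom.snd K H), ∃ b ∈ X.map (MonoidHom.fst H G), h = a * t * b) :
    Function.Surjective (Ftot X Y dcReps) := by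
  intro z
  induction z using Quot.ind with
  | mk pq =>
  obtain ⟨v, u⟩ := pq
  induction v using QuotientGroup.induction_on with
  | _ p =>
  induction u using QuotientGroup.induction_on with
  | _ q =>
  obtain ⟨k, h₁⟩ := p
  obtain ⟨h₂, g₁⟩ := q
  obtain ⟨t, ⟨htd, a, ha, b, hb, heq⟩, -⟩ := hreps (h₁⁻¹ * h₂)
  obtain ⟨⟨κ, a'⟩, hκa, rfl⟩ := ha
  obtain ⟨⟨b', γ⟩, hbγ, rfl⟩ := hb
  simp only [MonoidHom.coe_snd, MonoidHom.coe_fst] at heq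
  refine ⟨⟨⟨t, htd⟩, ((k * κ, g₁ * γ⁻¹) : K × G)⟩, ?_⟩
  show Fmap X Y t (k * κ, g₁ * γ⁻¹) = _
  unfold Fmap
  have h1 : (((k * κ, (1:H)) : K × H) : (K × H) ⧸ Y)
      = (((k, a'⁻¹) : K × H) : (K × H) ⧸ Y) := by
    rw [QuotientGroup.eq]
    have e : ((k * κ, (1:H)) : K × H)⁻¹ * (k, a'⁻¹) = (((κ, a') : K × H))⁻¹ := by
      ext <;> simp
    rw [e]; exact Y.inv_mem hκa
  have h2 : (((t, g₁ * γ⁻¹) : H × G) : (H × G) ⧸ X)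
      = (((t * b', g₁) : H × G) : (H × G) ⧸ X) := by
    rw [QuotientGroup.eq]
    have e : ((t, g₁ * γ⁻¹) : H × G)⁻¹ * (t * b', g₁) = ((b', γ) : H × G) := by
      ext <;> simp [mul_assoc]
    rw [e]; exact hbγ
  rw [h1, h2]
  symm
  apply Quot.sound
  refine ⟨h₁ * a', Prod.ext ?_ ?_⟩
  · show (((k, a'⁻¹) : K × H) : (K × H) ⧸ Y)
      = (((((1:K), (h₁ * a')⁻¹) : K × H) * (k, h₁) : K × H) : (K × H) ⧸ Y)
    congr 1
    ext
    · simp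
    · show a'⁻¹ = (h₁ * a')⁻¹ * h₁
      group
  · show (((t * b', g₁) : H × G) : (H × G) ⧸ X)
      = ((((((h₁ * a')⁻¹ : H), (1:G)) : H × G) * (h₂, g₁) : H × G) : (H × G) ⧸ X)
    congr 1
    ext
    · show t * b' = (h₁ * a')⁻¹ * h₂
      have : (h₁ * a')⁻¹ * h₂ = a'⁻¹ * (h₁⁻¹ * h₂) := by group
      rw [this, heq]
      group
    · simp

lemma Ftot_inj
    (hreps : ∀ h : H, ∃! t : H, t ∈ dcReps ∧
      ∃ a ∈ Y.map (MonoidHom.snd K H), ∃ b ∈ X.map (MonoidHom.fst H G), h = a * t * b) :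
    Function.Injective (Ftot X Y dcReps) := by
  rintro ⟨⟨t, ht⟩, c⟩ ⟨⟨t', ht'⟩, c'⟩ hfc
  induction c using QuotientGroup.induction_on with
  | _ kg =>
  induction c' using QuotientGroup.induction_on with
  | _ kg' =>
  obtain ⟨k, g⟩ := kg
  obtain ⟨k', g'⟩ := kg'
  have hq : Fmap X Y t (k, g) = Fmap X Y t' (k', g') := hfc
  unfold Fmap at hq
  rw [Quot.eq, Equivalence.eqvGen_iff (prodRel_equiv X Y)] at hq
  obtain ⟨h, hh⟩ := hq
  have h1 : (((k', (1:H)) : K × H) : (K × H) ⧸ Y)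
      = (((((1:K), h⁻¹) : K × H) * ((k, (1:H)) : K × H) : K × H) : (K × H) ⧸ Y) :=
    congrArg Prod.fst hh
  have h2 : (((t', g') : H × G) : (H × G) ⧸ X)
      = ((((h⁻¹, (1:G)) : H × G) * ((t, g) : H × G) : H × G) : (H × G) ⧸ X) :=
    congrArg Prod.snd hh
  rw [QuotientGroup.eq] at h1 h2
  have hY : ((k'⁻¹ * k, h⁻¹) : K × H) ∈ Y := by
    have e : ((k', (1:H)) : K × H)⁻¹ * (((1:K), h⁻¹) * (k, (1:H))) = ((k'⁻¹ * k, h⁻¹) : K × H) := by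
      ext <;> simp
    rwa [e] at h1
  have hX : ((t'⁻¹ * h⁻¹ * t, g'⁻¹ * g) : H × G) ∈ X := by
    have e : ((t', g') : H × G)⁻¹ * ((h⁻¹, (1:G)) * (t, g))
        = ((t'⁻¹ * h⁻¹ * t, g'⁻¹ * g) : H × G) := by
      ext <;> simp [mul_assoc]
    rwa [e] at h2
  obtain ⟨t₀, -, huniq⟩ := hreps t
  have et : t = t₀ :=
    huniq t ⟨ht, 1, ⟨1, Y.one_mem, rfl⟩, 1, ⟨1, X.one_mem, rfl⟩, by group⟩
  have et' : t' = t₀ := by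
    refine huniq t' ⟨ht', h, ⟨((k'⁻¹ * k, h⁻¹) : K × H)⁻¹, Y.inv_mem hY, by simp⟩,
      t'⁻¹ * h⁻¹ * t, ⟨(t'⁻¹ * h⁻¹ * t, g'⁻¹ * g), hX, rfl⟩, ?_⟩
    show t = h * t' * (t'⁻¹ * h⁻¹ * t)
    group
  have ett : t' = t := et'.trans et.symm
  subst ett
  have hmem : ((k, g) : K × G)⁻¹ * (k', g') ∈ starSubgroup X Y t' := by
    refine ⟨h, ?_, ?_⟩
    · show ((k⁻¹ * k', h) : K × H) ∈ Y
      have := Y.inv_mem hY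
      simpa using this
    · show ((t'⁻¹ * h * t', g⁻¹ * g') : H × G) ∈ X
      have := X.inv_mem hX
      simpa [mul_assoc] using this
  have hsub : (⟨t', ht⟩ : dcReps) = ⟨t', ht'⟩ := rfl
  exact congrArg (fun c => (⟨⟨t', ht⟩, c⟩ : Σ t : dcReps, (K × G) ⧸ starSubgroup X Y (t : H)))
    ((QuotientGroup.eq).2 hmem)

/-- the action of `(k, g)` on the quotient -/
def act (k : K) (g : G) : Quot (prodRel X Y) → Quot (prodRel X Y) :=
  Quot.lift
    (fun pq => Quot.mk _ ((((k, (1:H)) : K × H) • pq.1), ((((1:H), g⁻¹) : H × G) • pq.2)))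
    (by
      rintro ⟨v, u⟩ ⟨v', u'⟩ ⟨h, hh⟩
      have e1 : v' = (((1:K), h⁻¹) : K × H) • v := congrArg Prod.fst hh
      have e2 : u' = ((h⁻¹, (1:G)) : H × G) • u := congrArg Prod.snd hh
      dsimp only
      apply Quot.sound
      refine ⟨h, Prod.ext ?_ ?_⟩
      · dsimp only
        have hc : ((k, (1:H)) : K × H) * ((1:K), h⁻¹) = (((1:K), h⁻¹) : K × H) * (k, 1) := by
          ext <;> simp
        rw [e1, smul_smul, smul_smul, hc]
      · dsimp only
        have hc : (((1:H), g⁻¹) : H × G) * (h⁻¹, (1:G)) = ((h⁻¹, (1:G)) : H × G) * (1, g⁻¹) := by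
          ext <;> simp
        rw [e2, smul_smul, smul_smul, hc])

lemma Ftot_equivariant (t : dcReps) (c : (K × G) ⧸ starSubgroup X Y (t : H)) (k : K) (g : G) :
    Ftot X Y dcReps ⟨t, ((k, g⁻¹) : K × G) • c⟩ = act X Y k g (Ftot X Y dcReps ⟨t, c⟩) := by
  induction c using QuotientGroup.induction_on with
  | _ kg =>
  obtain ⟨k₀, g₀⟩ := kg
  show Fmap X Y (t : H) ((k, g⁻¹) * (k₀, g₀)) = act X Y k g (Fmap X Y (t : H) (k₀, g₀))
  unfold Fmap act
  apply congrArg (Quot.mk _)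
  refine Prod.ext ?_ ?_
  · show (((k * k₀, (1:H)) : K × H) : (K × H) ⧸ Y)
      = ((((k, (1:H)) : K × H) * (k₀, (1:H)) : K × H) : (K × H) ⧸ Y)
    congr 1
    ext <;> simp
  · show ((((t : H), g⁻¹ * g₀) : H × G) : (H × G) ⧸ X)
      = (((((1:H), g⁻¹) : H × G) * ((t : H), g₀) : H × G) : (H × G) ⧸ X)
    congr 1
    ext <;> simp

end MackeyAux

/-- Mackey formula for composition of transitive bisets:
`((K×H)/Y) ×_H ((H×G)/X) ≅ ⨆ t ∈ [p₂(Y)\H/p₁(X)], (K×G)/(Y * ⁽ᵗ'¹⁾X)`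
as `(K,G)`-bisets. -/
theorem biset_mackey_formula (X : Subgroup (H × G)) (Y : Subgroup (K × H))
    (dcReps : Set H)
    (hreps : ∀ h : H, ∃! t : H, t ∈ dcReps ∧
      ∃ a ∈ Y.map (MonoidHom.snd K H), ∃ b ∈ X.map (MonoidHom.fst H G), h = a * t * b) :
    ∃ e : Quot (prodRel X Y) ≃ (Σ t : dcReps, (K × G) ⧸ starSubgroup X Y (t : H)),
      ∀ (k : K) (g : G) (p : K × H) (q : H × G),
        e (Quot.mk _ (((((k, (1:H)) : K × H) * p : K × H) : (K × H) ⧸ Y),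
            (((((1:H), g⁻¹) : H × G) * q : H × G) : (H × G) ⧸ X))) =
          ⟨(e (Quot.mk _ ((p : (K × H) ⧸ Y), (q : (H × G) ⧸ X)))).1,
            (((k, g⁻¹) : K × G)) • (e (Quot.mk _ ((p : (K × H) ⧸ Y), (q : (H × G) ⧸ X)))).2⟩ := by
  have hbij : Function.Bijective (MackeyAux.Ftot X Y dcReps) :=
    ⟨MackeyAux.Ftot_inj X Y dcReps hreps, MackeyAux.Ftot_surj X Y dcReps hreps⟩
  set E := Equiv.ofBijective _ hbij with hE
  refine ⟨E.symm, ?_⟩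
  intro k g p q
  set m : Quot (prodRel X Y) := Quot.mk _ ((p : (K × H) ⧸ Y), (q : (H × G) ⧸ X)) with hm
  have heqv := MackeyAux.Ftot_equivariant X Y dcReps (E.symm m).1 (E.symm m).2 k g
  have hm2 : MackeyAux.Ftot X Y dcReps ⟨(E.symm m).1, (E.symm m).2⟩ = m := E.apply_symm_apply m
  rw [hm2] at heqv
  rw [Equiv.symm_apply_eq]
  exact Eq.trans (rfl : _ = MackeyAux.act X Y k g m) heqv.symm
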